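/- Safe set characterization by the undiscounted value: if U and D are finite and X is finite, then V_∞(x) ≥ 0 if and only if x belongs to the safe set, i.e., there exists a stationary control policy π_u : X → U such that for every disturbance sequence (d_t) with d_t ∈ D, the closed-loop trajectory from x satisfies g(x_t) ≥ 0 for all t ∈ ℕ. -/

import Mathlib

/-- Undiscounted Isaacs safety operator. -/
noncomputable def Topr {X U D : Type*} [Fintype U] [Fintype D] [Nonempty U] [Nonempty D]
    (f : X → U → D → X) (g : X → ℝ) (V : X → ℝ) : X → ℝ := fun x =>
  Finset.univ.sup' Finset.univ_nonempty fun u : U =>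
    Finset.univ.inf' Finset.univ_nonempty fun d : D =>
      min (g x) (V (f x u d))

/-- Closed-loop trajectory: stationary state-feedback control against an arbitrary
disturbance sequence. -/
def trajFeedback {X U D : Type*} (f : X → U → D → X) (π : X → U) (d : ℕ → D)
    (x : X) : ℕ → X
  | 0 => x
  | k + 1 => f (trajFeedback f π d x k) (π (trajFeedback f π d x k)) (d k)

section Aux
variable {X U D : Type*} [Fintype U] [Fintype D] [Nonempty U] [Nonempty D]
  (f : X → U → D → X) (g : X → ℝ)

lemma Topr_mono {V W : X → ℝ} (h : ∀ y, V y ≤ W y) (x : X) :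
    Topr f g V x ≤ Topr f g W x := by
  apply Finset.sup'_le
  intro u hu
  refine Finset.le_sup'_of_le _ hu ?_
  apply Finset.le_inf'
  intro d hd
  refine Finset.inf'_le_of_le _ (Finset.mem_univ d) ?_
  exact min_le_min le_rfl (h _)

lemma Topr_le_g (V : X → ℝ) (x : X) : Topr f g V x ≤ g x := by
  apply Finset.sup'_le
  intro u hu
  refine Finset.inf'_le_of_le _ (Finset.mem_univ (Classical.arbitrary D)) ?_
  exact min_le_left _ _

lemma iter_mono (k : ℕ) : ∀ V W : X → ℝ, (∀ y, V y ≤ W y) →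
    ∀ y : X, (Topr f g)^[k] V y ≤ (Topr f g)^[k] W y := by
  induction k with
  | zero => intro V W h y; exact h y
  | succ k ih =>
      intro V W h y
      rw [Function.iterate_succ_apply, Function.iterate_succ_apply]
      exact ih _ _ (Topr_mono f g h) y

lemma iter_succ_le (k : ℕ) : ∀ x : X, (Topr f g)^[k+1] g x ≤ (Topr f g)^[k] g x := by
  intro x
  rw [Function.iterate_succ_apply]
  exact iter_mono f g k _ _ (Topr_le_g f g g) x

lemma iter_anti {k k' : ℕ} (h : k ≤ k') (x : X) :
    (Topr f g)^[k'] g x ≤ (Topr f g)^[k] g x := by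
  have hA : Antitone fun n : ℕ => (Topr f g)^[n] g x :=
    antitone_nat_of_succ_le (fun n => iter_succ_le f g n x)
  exact hA h

lemma iter_lb [Fintype X] [Nonempty X] (k : ℕ) :
    ∀ x : X, (Finset.univ.inf' Finset.univ_nonempty g) ≤ (Topr f g)^[k] g x := by
  induction k with
  | zero => intro x; exact Finset.inf'_le _ (Finset.mem_univ x)
  | succ k ih =>
      intro x
      rw [Function.iterate_succ_apply']
      refine Finset.le_sup'_of_le _ (Finset.mem_univ (Classical.arbitrary U)) ?_
      apply Finset.le_inf'
      intro d hd
      exact le_min (Finset.inf'_le _ (Finset.mem_univ x)) (ih _)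

omit [Fintype U] [Fintype D] [Nonempty U] [Nonempty D] in
lemma traj_shift (π : X → U) (d0 : D) (d : ℕ → D) (y : X) :
    ∀ t, trajFeedback f π d (f y (π y) d0) t =
      trajFeedback f π (fun n => Nat.casesOn n d0 d) y (t+1) := by
  intro t
  induction t with
  | zero => rfl
  | succ t ih => simp [trajFeedback, ih]

end Aux

/-- safe set characterization: for finite `X`, `U`, `D`, the
undiscounted value `V_∞(x) = inf_k (T^k g)(x)` is nonnegative iff there is a
stationary control policy keeping `g ≥ 0` along the closed-loop trajectory from `x`
for all time, against every disturbance sequence. -/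
theorem stmt18 {X U D : Type*} [Fintype X] [Fintype U] [Fintype D]
    [Nonempty X] [Nonempty U] [Nonempty D]
    (f : X → U → D → X) (g : X → ℝ)
    (Vinf : X → ℝ) (hVinf : ∀ x, Vinf x = ⨅ k : ℕ, (Topr f g)^[k] g x) (x : X) :
    0 ≤ Vinf x ↔
      ∃ πu : X → U, ∀ d : ℕ → D, ∀ t : ℕ, 0 ≤ g (trajFeedback f πu d x t) := by
  classical
  have hbdd : ∀ y : X, BddBelow (Set.range fun k : ℕ => (Topr f g)^[k] g y) := by
    intro y
    exact ⟨_, by rintro _ ⟨k, rfl⟩; exact iter_lb f g k y⟩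
  have hiff : ∀ y : X, 0 ≤ Vinf y ↔ ∀ k : ℕ, 0 ≤ (Topr f g)^[k] g y := by
    intro y
    rw [hVinf]
    constructor
    · intro h k
      exact le_trans h (ciInf_le (hbdd y) k)
    · intro h
      exact le_ciInf h
  rw [hiff]
  constructor
  · -- forward: build policy
    intro hS
    set S : X → Prop := fun y => ∀ k : ℕ, 0 ≤ (Topr f g)^[k] g y with hSdef
    have step : ∀ y : X, S y → ∃ u : U, ∀ d : D, S (f y u d) := by
      intro y hy
      have huk : ∀ k : ℕ, ∃ u : U, ∀ d : D, 0 ≤ (Topr f g)^[k] g (f y u d) := by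
        intro k
        have h1 : 0 ≤ (Topr f g)^[k+1] g y := hy (k+1)
        rw [Function.iterate_succ_apply'] at h1
        obtain ⟨u, hu, heq⟩ := Finset.exists_mem_eq_sup' (Finset.univ_nonempty)
          (fun u : U => Finset.univ.inf' Finset.univ_nonempty fun d : D =>
            min (g y) ((Topr f g)^[k] g (f y u d)))
        refine ⟨u, fun d => ?_⟩
        have h2 : 0 ≤ Finset.univ.inf' Finset.univ_nonempty fun d : D =>
            min (g y) ((Topr f g)^[k] g (f y u d)) := by
          rw [← heq]; exact h1
        have h3 := le_trans h2 (Finset.inf'_le _ (Finset.mem_univ d))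
        exact le_trans h3 (min_le_right _ _)
      choose uk hukspec using huk
      obtain ⟨u, hu⟩ := Finite.exists_infinite_fiber uk
      have hinf : (uk ⁻¹' {u}).Infinite := Set.infinite_coe_iff.mp hu
      refine ⟨u, fun d k => ?_⟩
      obtain ⟨k', hk'mem, hk'⟩ := hinf.exists_gt k
      have : uk k' = u := hk'mem
      have h0 : 0 ≤ (Topr f g)^[k'] g (f y u d) := by
        rw [← this]; exact hukspec k' d
      exact le_trans h0 (iter_anti f g (le_of_lt hk') _)
    let πu : X → U := fun y => if h : S y then (step y h).choose else Classical.arbitrary U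
    have hπu : ∀ y : X, S y → ∀ d : D, S (f y (πu y) d) := by
      intro y hy d
      have := (step y hy).choose_spec d
      simpa [πu, dif_pos hy] using this
    refine ⟨πu, fun d t => ?_⟩
    have hinv : ∀ t : ℕ, S (trajFeedback f πu d x t) := by
      intro t
      induction t with
      | zero => exact hS
      | succ t ih => exact hπu _ ih (d t)
    have := hinv t 0
    simpa using this
  · -- reverse
    rintro ⟨πu, hsafe⟩
    have main : ∀ k : ℕ, ∀ y : X,
        (∀ d : ℕ → D, ∀ t : ℕ, 0 ≤ g (trajFeedback f πu d y t)) →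
        0 ≤ (Topr f g)^[k] g y := by
      intro k
      induction k with
      | zero =>
          intro y hy
          simpa [trajFeedback] using hy (fun _ => Classical.arbitrary D) 0
      | succ k ih =>
          intro y hy
          rw [Function.iterate_succ_apply']
          show 0 ≤ Finset.univ.sup' _ fun u : U =>
            Finset.univ.inf' Finset.univ_nonempty fun d : D =>
              min (g y) ((Topr f g)^[k] g (f y u d))
          refine Finset.le_sup'_of_le _ (Finset.mem_univ (πu y)) ?_
          apply Finset.le_inf'
          intro d hd
          refine le_min ?_ ?_
          · simpa [trajFeedback] using hy (fun _ => Classical.arbitrary D) 0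
          · apply ih
            intro d' t
            rw [traj_shift]
            exact hy _ _
    intro k
    exact main k x hsafe
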